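/- The incidence graph of the geometry with points the 2-element subsets of {1,...,6} and lines the perfect matchings of {1,...,6} has girth 8. -/

import Mathlib

open scoped Classical

/-- A point: a 2-element subset of {1,...,6}. -/
def IsPointW2 (p : Finset (Fin 6)) : Prop := p.card = 2

/-- A line: a perfect matching of {1,...,6}. -/
def IsLineW2 (L : Finset (Finset (Fin 6))) : Prop :=
  L.card = 3 ∧ (∀ p ∈ L, p.card = 2) ∧ (∀ p ∈ L, ∀ q ∈ L, p ≠ q → Disjoint p q) ∧
    (∀ i : Fin 6, ∃ p ∈ L, i ∈ p)

/-- Vertices of the incidence graph: points on the left, lines on the right. -/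
abbrev VW2 := {p : Finset (Fin 6) // IsPointW2 p} ⊕ {L : Finset (Finset (Fin 6)) // IsLineW2 L}

/-- The incidence graph: a point-vertex and a line-vertex are adjacent iff the point belongs
to the line. -/
noncomputable def IncGraphW2 : SimpleGraph VW2 :=
  SimpleGraph.fromRel (fun x y =>
    match x, y with
    | Sum.inl p, Sum.inr L => p.1 ∈ L.1
    | _, _ => False)



lemma adj_lr {p L} : IncGraphW2.Adj (Sum.inl p) (Sum.inr L) ↔ p.1 ∈ L.1 := by
  simp [IncGraphW2, SimpleGraph.fromRel_adj]

lemma not_adj_ll {p q} : ¬ IncGraphW2.Adj (Sum.inl p) (Sum.inl q) := by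
  simp [IncGraphW2, SimpleGraph.fromRel_adj]

lemma not_adj_rr {L M} : ¬ IncGraphW2.Adj (Sum.inr L) (Sum.inr M) := by
  simp [IncGraphW2, SimpleGraph.fromRel_adj]

lemma adj_rl {p L} : IncGraphW2.Adj (Sum.inr L) (Sum.inl p) ↔ p.1 ∈ L.1 := by
  rw [SimpleGraph.adj_comm]; exact adj_lr

lemma line_triple {L p q} (hL : IsLineW2 L) (hp : p ∈ L) (hq : q ∈ L) (hpq : p ≠ q) :
    L = {p, q, (p ∪ q)ᶜ} := by
  obtain ⟨hc, h2, hdisj, -⟩ := hL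
  have hd : Disjoint p q := hdisj p hp q hq hpq
  have hu : (p ∪ q).card = 4 := by
    rw [Finset.card_union_of_disjoint hd, h2 p hp, h2 q hq]
  have hcc : (p ∪ q)ᶜ.card = 2 := by
    rw [Finset.card_compl, hu]; rfl
  have key : ∀ r ∈ L, r = p ∨ r = q ∨ r = (p ∪ q)ᶜ := by
    intro r hr
    by_cases h1 : r = p; · exact Or.inl h1
    by_cases h1' : r = q; · exact Or.inr (Or.inl h1')
    refine Or.inr (Or.inr ?_)
    have dp := hdisj r hr p hp h1
    have dq := hdisj r hr q hq h1'
    have hsub : r ⊆ (p ∪ q)ᶜ := by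
      intro x hx
      simp only [Finset.mem_compl, Finset.mem_union]
      push_neg
      exact ⟨Finset.disjoint_left.mp dp hx, Finset.disjoint_left.mp dq hx⟩
    exact Finset.eq_of_subset_of_card_le hsub (by rw [hcc, h2 r hr])
  have hsub : L ⊆ {p, q, (p ∪ q)ᶜ} := by
    intro r hr
    simp only [Finset.mem_insert, Finset.mem_singleton]
    exact key r hr
  refine Finset.eq_of_subset_of_card_le hsub ?_
  calc ({p, q, (p ∪ q)ᶜ} : Finset _).card
      ≤ ({q, (p ∪ q)ᶜ} : Finset _).card + 1 := Finset.card_insert_le _ _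
    _ ≤ 3 := by simpa using Nat.add_le_add_right (Finset.card_insert_le q ({(p ∪ q)ᶜ} : Finset (Finset (Fin 6)))) 1
    _ ≤ L.card := by rw [hc]

lemma unique_line {L M p q} (hL : IsLineW2 L) (hM : IsLineW2 M) (hpq : p ≠ q)
    (h1 : p ∈ L) (h2 : q ∈ L) (h3 : p ∈ M) (h4 : q ∈ M) : L = M := by
  rw [line_triple hL h1 h2 hpq, line_triple hM h3 h4 hpq]

lemma no_triangle {L1 L2 L3 p1 p2 p3} (hL1 : IsLineW2 L1) (hL2 : IsLineW2 L2) (hL3 : IsLineW2 L3)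
    (h12 : p1 ≠ p2) (h23 : p2 ≠ p3) (h31 : p3 ≠ p1) (hLL : L1 ≠ L2)
    (m1 : p1 ∈ L1) (m2 : p2 ∈ L1) (m3 : p2 ∈ L2) (m4 : p3 ∈ L2) (m5 : p3 ∈ L3) (m6 : p1 ∈ L3) :
    False := by
  have d12 : Disjoint p1 p2 := hL1.2.2.1 p1 m1 p2 m2 h12
  have d23 : Disjoint p2 p3 := hL2.2.2.1 p2 m3 p3 m4 h23
  have d31 : Disjoint p3 p1 := hL3.2.2.1 p3 m5 p1 m6 h31
  have c1 := hL1.2.1 p1 m1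
  have c2 := hL1.2.1 p2 m2
  have c3 := hL2.2.1 p3 m4
  have e3 : p3 = (p1 ∪ p2)ᶜ := by
    have hsub : p3 ⊆ (p1 ∪ p2)ᶜ := by
      intro x hx
      simp only [Finset.mem_compl, Finset.mem_union]
      push_neg
      exact ⟨Finset.disjoint_left.mp d31 hx, Finset.disjoint_right.mp d23 hx⟩
    refine Finset.eq_of_subset_of_card_le hsub ?_
    rw [Finset.card_compl, Finset.card_union_of_disjoint d12, c1, c2, c3]; simp
  have e1 : p1 = (p2 ∪ p3)ᶜ := by
    have hsub : p1 ⊆ (p2 ∪ p3)ᶜ := by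
      intro x hx
      simp only [Finset.mem_compl, Finset.mem_union]
      push_neg
      exact ⟨Finset.disjoint_left.mp d12 hx, Finset.disjoint_right.mp d31 hx⟩
    refine Finset.eq_of_subset_of_card_le hsub ?_
    rw [Finset.card_compl, Finset.card_union_of_disjoint d23, c2, c3, c1]; simp
  apply hLL
  rw [line_triple hL1 m1 m2 h12, line_triple hL2 m3 m4 h23, ← e3, ← e1]
  ext x; simp; tauto

set_option maxHeartbeats 1000000 in
lemma cycle_ge (a : VW2) (w : IncGraphW2.Walk a a) (hw : w.IsCycle) : 8 ≤ w.length := by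
  by_contra hlt
  push_neg at hlt
  obtain _ | ⟨h1, w⟩ := w
  · simp [SimpleGraph.Walk.isCycle_def] at hw
  rename_i v1
  obtain ⟨p0, hp0⟩ | ⟨M0, hM0⟩ := a
  · -- start at a point
    obtain ⟨q, hq⟩ | ⟨L1, hL1⟩ := v1
    · exact not_adj_ll h1
    rw [adj_lr] at h1
    obtain _ | ⟨h2, w⟩ := w
    rename_i v2
    obtain ⟨p1, hp1⟩ | ⟨M, hM⟩ := v2
    swap
    · exact not_adj_rr h2
    rw [adj_rl] at h2
    obtain _ | ⟨h3, w⟩ := w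
    · simp [SimpleGraph.Walk.isCycle_def] at hw
    rename_i v3
    obtain ⟨q, hq⟩ | ⟨L2, hL2⟩ := v3
    · exact not_adj_ll h3
    rw [adj_lr] at h3
    obtain _ | ⟨h4, w⟩ := w
    rename_i v4
    obtain ⟨p2, hp2⟩ | ⟨M, hM⟩ := v4
    swap
    · exact not_adj_rr h4
    rw [adj_rl] at h4
    obtain _ | ⟨h5, w⟩ := w
    · -- length 4 cycle
      rw [SimpleGraph.Walk.isCycle_def] at hw
      obtain ⟨-, -, hnd⟩ := hw
      simp [SimpleGraph.Walk.support] at hnd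
      exact hnd.1 (unique_line hL1 hL2 (fun h => hnd.2 h.symm) h1 h2 h4 h3)
    rename_i v5
    obtain ⟨q, hq⟩ | ⟨L3, hL3⟩ := v5
    · exact not_adj_ll h5
    rw [adj_lr] at h5
    obtain _ | ⟨h6, w⟩ := w
    rename_i v6
    obtain ⟨p3, hp3⟩ | ⟨M, hM⟩ := v6
    swap
    · exact not_adj_rr h6
    rw [adj_rl] at h6
    obtain _ | ⟨h7, w⟩ := w
    · -- length 6 cycle
      rw [SimpleGraph.Walk.isCycle_def] at hw
      obtain ⟨-, -, hnd⟩ := hw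
      simp [SimpleGraph.Walk.support] at hnd
      exact no_triangle hL1 hL2 hL3 (fun h => hnd.2.1.2 h.symm) hnd.2.1.1
        hnd.2.2.2 hnd.1.1 h1 h2 h3 h4 h5 h6
    rename_i v7
    obtain ⟨q, hq⟩ | ⟨L4, hL4⟩ := v7
    · exact not_adj_ll h7
    rw [adj_lr] at h7
    obtain _ | ⟨h8, w⟩ := w
    simp [SimpleGraph.Walk.length_cons] at hlt
    omega
  · -- start at a line
    obtain ⟨p1, hp1⟩ | ⟨L, hL⟩ := v1
    swap
    · exact not_adj_rr h1
    rw [adj_rl] at h1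
    obtain _ | ⟨h2, w⟩ := w
    rename_i v2
    obtain ⟨q, hq⟩ | ⟨M1, hM1⟩ := v2
    · exact not_adj_ll h2
    rw [adj_lr] at h2
    obtain _ | ⟨h3, w⟩ := w
    · simp [SimpleGraph.Walk.isCycle_def] at hw
    rename_i v3
    obtain ⟨p2, hp2⟩ | ⟨L, hL⟩ := v3
    swap
    · exact not_adj_rr h3
    rw [adj_rl] at h3
    obtain _ | ⟨h4, w⟩ := w
    rename_i v4
    obtain ⟨q, hq⟩ | ⟨M2, hM2⟩ := v4
    · exact not_adj_ll h4
    rw [adj_lr] at h4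
    obtain _ | ⟨h5, w⟩ := w
    · -- length 4 cycle
      rw [SimpleGraph.Walk.isCycle_def] at hw
      obtain ⟨-, -, hnd⟩ := hw
      simp [SimpleGraph.Walk.support] at hnd
      exact hnd.2 (unique_line hM1 hM0 hnd.1 h2 h3 h1 h4)
    rename_i v5
    obtain ⟨p3, hp3⟩ | ⟨L, hL⟩ := v5
    swap
    · exact not_adj_rr h5
    rw [adj_rl] at h5
    obtain _ | ⟨h6, w⟩ := w
    rename_i v6
    obtain ⟨q, hq⟩ | ⟨M3, hM3⟩ := v6
    · exact not_adj_ll h6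
    rw [adj_lr] at h6
    obtain _ | ⟨h7, w⟩ := w
    · -- length 6 cycle
      rw [SimpleGraph.Walk.isCycle_def] at hw
      obtain ⟨-, -, hnd⟩ := hw
      simp [SimpleGraph.Walk.support] at hnd
      exact no_triangle hM1 hM2 hM0 hnd.1.1 hnd.2.2.1
        (fun h => hnd.1.2 h.symm) hnd.2.1.1 h2 h3 h4 h5 h6 h1
    rename_i v7
    obtain ⟨p4, hp4⟩ | ⟨L, hL⟩ := v7
    swap
    · exact not_adj_rr h7
    rw [adj_rl] at h7
    obtain _ | ⟨h8, w⟩ := w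
    simp [SimpleGraph.Walk.length_cons] at hlt
    omega

def P1 : {p : Finset (Fin 6) // IsPointW2 p} := ⟨{0,1}, by unfold IsPointW2; decide⟩
def P2 : {p : Finset (Fin 6) // IsPointW2 p} := ⟨{2,3}, by unfold IsPointW2; decide⟩
def P3 : {p : Finset (Fin 6) // IsPointW2 p} := ⟨{0,5}, by unfold IsPointW2; decide⟩
def P4 : {p : Finset (Fin 6) // IsPointW2 p} := ⟨{2,4}, by unfold IsPointW2; decide⟩
set_option maxRecDepth 10000 in
def Q1 : {L : Finset (Finset (Fin 6)) // IsLineW2 L} := ⟨{{0,1},{2,3},{4,5}}, by unfold IsLineW2; decide⟩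
set_option maxRecDepth 10000 in
def Q2 : {L : Finset (Finset (Fin 6)) // IsLineW2 L} := ⟨{{2,3},{0,5},{1,4}}, by unfold IsLineW2; decide⟩
set_option maxRecDepth 10000 in
def Q3 : {L : Finset (Finset (Fin 6)) // IsLineW2 L} := ⟨{{0,5},{2,4},{1,3}}, by unfold IsLineW2; decide⟩
set_option maxRecDepth 10000 in
def Q4 : {L : Finset (Finset (Fin 6)) // IsLineW2 L} := ⟨{{2,4},{0,1},{3,5}}, by unfold IsLineW2; decide⟩

set_option maxRecDepth 10000 in
noncomputable def w8 : IncGraphW2.Walk (Sum.inl P1) (Sum.inl P1) :=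
  SimpleGraph.Walk.cons (v := Sum.inr Q1) (adj_lr.mpr (by decide)) <|
  SimpleGraph.Walk.cons (v := Sum.inl P2) (adj_rl.mpr (by decide)) <|
  SimpleGraph.Walk.cons (v := Sum.inr Q2) (adj_lr.mpr (by decide)) <|
  SimpleGraph.Walk.cons (v := Sum.inl P3) (adj_rl.mpr (by decide)) <|
  SimpleGraph.Walk.cons (v := Sum.inr Q3) (adj_lr.mpr (by decide)) <|
  SimpleGraph.Walk.cons (v := Sum.inl P4) (adj_rl.mpr (by decide)) <|
  SimpleGraph.Walk.cons (v := Sum.inr Q4) (adj_lr.mpr (by decide)) <|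
  SimpleGraph.Walk.cons (v := Sum.inl P1) (adj_rl.mpr (by decide)) SimpleGraph.Walk.nil

set_option maxRecDepth 100000 in
lemma w8_isCycle : w8.IsCycle := by
  rw [SimpleGraph.Walk.isCycle_def]
  refine ⟨⟨?_⟩, ?_, ?_⟩
  · show (w8.edges).Nodup
    decide
  · simp [w8]
  · show (w8.support.tail).Nodup
    decide

/-- The incidence graph of W(2) has girth 8. -/
theorem IncGraphW2_girth_eight : IncGraphW2.egirth = 8 := by
  apply le_antisymm
  · have h : IncGraphW2.egirth ≤ (w8.length : ℕ∞) := by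
      rw [SimpleGraph.egirth]
      exact iInf_le_of_le _ (iInf_le_of_le w8 (iInf_le_of_le w8_isCycle le_rfl))
    have hlen : w8.length = 8 := rfl
    rw [hlen] at h
    exact_mod_cast h
  · rw [SimpleGraph.le_egirth]
    intro a w hw
    exact_mod_cast cycle_ge a w hw
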